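/- arXiv:1712.05431 — 3 statements merged into one kernel-verified Lean document; each statement's English description precedes it below -/
import Mathlib

section
/- For K ≥ 4, (2 + √K/2)^K − (1 − √K/2)^K ≤ (1 + √K)^K; conversely, for 1 ≤ K < 4 (i.e., K ∈ {1, 2, 3}), (1 + √K)^K ≤ (2 + √K/2)^K − (1 − √K/2)^K. -/
open Real

/-- Comparison of the integer-point-counting constants `c₁ = (1+√K)^K` and
`c₂ = (2+√K/2)^K − (1−√K/2)^K`: for `K ≥ 4`, `c₂ ≤ c₁`; for `1 ≤ K < 4`, `c₁ ≤ c₂`. -/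
theorem c_max_comparison (K : ℕ) (hK : 1 ≤ K) :
    (4 ≤ K →
      (2 + Real.sqrt K / 2) ^ K - (1 - Real.sqrt K / 2) ^ K ≤ (1 + Real.sqrt K) ^ K)
    ∧ (K < 4 →
      (1 + Real.sqrt K) ^ K ≤ (2 + Real.sqrt K / 2) ^ K - (1 - Real.sqrt K / 2) ^ K) := by
  constructor
  · intro h4
    set s := Real.sqrt K with hs
    have hs2 : 2 ≤ s := by
      have : Real.sqrt 4 ≤ s := Real.sqrt_le_sqrt (by exact_mod_cast h4)
      have h4' : Real.sqrt 4 = 2 := by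
        rw [show (4:ℝ) = 2^2 by norm_num, Real.sqrt_sq (by norm_num : (0:ℝ) ≤ 2)]
      linarith [h4' ▸ this]
    have hc : 0 ≤ s/2 - 1 := by linarith
    have h1 : -((s/2-1)^K) ≤ (1 - s/2) ^ K := by
      have habs : |(1 - s/2)^K| = (s/2-1)^K := by
        rw [abs_pow, abs_of_nonpos (by linarith : (1:ℝ) - s/2 ≤ 0)]
        ring_nf
      have := neg_abs_le ((1 - s/2)^K)
      rw [habs] at this
      exact this
    have key : (2 + s/2)^K + (s/2-1)^K ≤ (1+s)^K := by
      have h := pow_add_pow_le (x := 2 + s/2) (y := s/2 - 1) (by linarith) hc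
        (by omega : K ≠ 0)
      have he : (2 + s/2) + (s/2 - 1) = 1 + s := by ring
      rwa [he] at h
    linarith
  · intro h4
    interval_cases K
    · norm_num [Real.sqrt_one]
    · have h2 : Real.sqrt 2 ^ 2 = 2 := Real.sq_sqrt (by norm_num)
      have hn : 0 ≤ Real.sqrt 2 := Real.sqrt_nonneg 2
      push_cast
      nlinarith [h2, hn, sq_nonneg (Real.sqrt 2 - 1)]
    · have h3 : Real.sqrt 3 ^ 2 = 3 := Real.sq_sqrt (by norm_num)
      have hn : 0 ≤ Real.sqrt 3 := Real.sqrt_nonneg 3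
      push_cast
      nlinarith [h3, hn, sq_nonneg (Real.sqrt 3 - 1), sq_nonneg (Real.sqrt 3 + 1)]
end

section
/- Let S be a K-dimensional diagonal positive semidefinite matrix, P ∈ ℝ^{K×K}, and A, A' two invertible integer matrices where A' is optimal for a second diagonal matrix S^Δ satisfying S ≼ η² S^Δ entrywise on the diagonal (s_i² ≤ η² s_{i,Δ}² for all i) with η ≥ 1. If R_IF(S, P; A) denotes K · max_k (1/2)log₂(a_kᵀ P(I+S)Pᵀ a_k), then the value at the optimal A for S satisfies R_IF^opt(S, P) ≤ R_IF^opt(S^Δ, P) + K log₂ η. -/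
open Matrix Real

/-- The IF sum rate for diagonal source covariance `diagonal s`, precoder `P`,
and integer matrix `A`: `K · max_k (1/2)log₂(a_kᵀ P (I + S) Pᵀ a_k)`, where `a_k`
is the `k`-th row of `A`. -/
noncomputable def ifRate {K : ℕ} (s : Fin K → ℝ) (P : Matrix (Fin K) (Fin K) ℝ)
    (A : Matrix (Fin K) (Fin K) ℤ) : ℝ :=
  (K : ℝ) * ⨆ k : Fin K, (1 / 2 : ℝ) * Real.logb 2
    (((A.map (Int.cast : ℤ → ℝ)) * P * (1 + Matrix.diagonal s) * Pᵀ
      * (A.map (Int.cast : ℤ → ℝ))ᵀ) k k)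

/-- The optimal IF sum rate: the infimum over full-rank integer matrices `A`. -/
noncomputable def ifRateOpt {K : ℕ} (s : Fin K → ℝ) (P : Matrix (Fin K) (Fin K) ℝ) : ℝ :=
  sInf {r : ℝ | ∃ A : Matrix (Fin K) (Fin K) ℤ, A.det ≠ 0 ∧ r = ifRate s P A}

lemma ifRate_entry_eq {K : ℕ} (s : Fin K → ℝ) (P : Matrix (Fin K) (Fin K) ℝ)
    (A : Matrix (Fin K) (Fin K) ℤ) (k : Fin K) :
    ((A.map (Int.cast : ℤ → ℝ)) * P * (1 + Matrix.diagonal s) * Pᵀ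
      * (A.map (Int.cast : ℤ → ℝ))ᵀ) k k
    = ∑ i, (((A.map (Int.cast : ℤ → ℝ)) * P) k i) ^ 2 * (1 + s i) := by
  set B := (A.map (Int.cast : ℤ → ℝ)) * P with hB
  have h1 : (1 + Matrix.diagonal s : Matrix (Fin K) (Fin K) ℝ)
      = Matrix.diagonal (fun i => 1 + s i) := by
    rw [← Matrix.diagonal_one, Matrix.diagonal_add]
  have h2 : (A.map (Int.cast : ℤ → ℝ)) * P * (1 + Matrix.diagonal s) * Pᵀ
      * (A.map (Int.cast : ℤ → ℝ))ᵀ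
      = (B * Matrix.diagonal (fun i => 1 + s i)) * Bᵀ := by
    rw [h1, hB, Matrix.transpose_mul]
    simp only [Matrix.mul_assoc]
  rw [h2, Matrix.mul_apply]
  refine Finset.sum_congr rfl fun i _ => ?_
  rw [Matrix.mul_diagonal, Matrix.transpose_apply]
  ring

lemma ifRate_le_of {K : ℕ} (hK : 0 < K) (P : Matrix (Fin K) (Fin K) ℝ)
    (s t : Fin K → ℝ) (hs : ∀ i, 0 ≤ s i) (ht : ∀ i, 0 ≤ t i)
    (c : ℝ) (hc : 1 ≤ c) (h : ∀ i, 1 + s i ≤ c * (1 + t i))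
    (A : Matrix (Fin K) (Fin K) ℤ) :
    ifRate s P A ≤ ifRate t P A + (K : ℝ) * ((1 / 2 : ℝ) * Real.logb 2 c) := by
  have : Nonempty (Fin K) := ⟨⟨0, hK⟩⟩
  set B := (A.map (Int.cast : ℤ → ℝ)) * P with hB
  set q1 : Fin K → ℝ := fun k => ∑ i, (B k i) ^ 2 * (1 + s i) with hq1
  set q2 : Fin K → ℝ := fun k => ∑ i, (B k i) ^ 2 * (1 + t i) with hq2
  have key : ∀ k, (1 / 2 : ℝ) * Real.logb 2 (q1 k)
      ≤ (1 / 2 : ℝ) * Real.logb 2 (q2 k) + (1 / 2 : ℝ) * Real.logb 2 c := by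
    intro k
    have hq1n : 0 ≤ q1 k := Finset.sum_nonneg fun i _ =>
      mul_nonneg (sq_nonneg _) (by linarith [hs i])
    have hle : q1 k ≤ c * q2 k := by
      rw [hq2]
      simp only [Finset.mul_sum]
      refine Finset.sum_le_sum fun i _ => ?_
      calc (B k i) ^ 2 * (1 + s i) ≤ (B k i) ^ 2 * (c * (1 + t i)) :=
            mul_le_mul_of_nonneg_left (h i) (sq_nonneg _)
        _ = c * ((B k i) ^ 2 * (1 + t i)) := by ring
    rcases eq_or_lt_of_le hq1n with hz | hpos
    · have hzero : ∀ i ∈ Finset.univ, (B k i) ^ 2 * (1 + s i) = 0 :=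
        (Finset.sum_eq_zero_iff_of_nonneg fun i _ =>
          mul_nonneg (sq_nonneg _) (by linarith [hs i])).mp hz.symm
      have hB0 : ∀ i, B k i = 0 := fun i => by
        have := hzero i (Finset.mem_univ i)
        have hpos : (0:ℝ) < 1 + s i := by linarith [hs i]
        have : (B k i) ^ 2 = 0 := by
          rcases mul_eq_zero.mp this with h' | h'
          · exact h'
          · linarith
        exact pow_eq_zero_iff (n := 2) (by norm_num) |>.mp this
      have hq2z : q2 k = 0 := Finset.sum_eq_zero fun i _ => by rw [hB0 i]; ring
      rw [← hz, hq2z, Real.logb_zero]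
      have := Real.logb_nonneg (b := 2) one_lt_two hc
      linarith
    · have hq2pos : 0 < q2 k := by nlinarith
      have h1 : Real.logb 2 (q1 k) ≤ Real.logb 2 (c * q2 k) :=
        Real.logb_le_logb_of_le one_lt_two hpos hle
      rw [Real.logb_mul (by linarith) (ne_of_gt hq2pos)] at h1
      linarith
  have hrw : ∀ (u : Fin K → ℝ), ifRate u P A = (K : ℝ) *
      ⨆ k : Fin K, (1 / 2 : ℝ) * Real.logb 2 (∑ i, (B k i) ^ 2 * (1 + u i)) := by
    intro u
    unfold ifRate
    congr 1
    refine iSup_congr fun k => ?_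
    rw [ifRate_entry_eq]
  rw [hrw s, hrw t]
  have hsup : (⨆ k : Fin K, (1 / 2 : ℝ) * Real.logb 2 (q1 k))
      ≤ (⨆ k : Fin K, (1 / 2 : ℝ) * Real.logb 2 (q2 k)) + (1 / 2 : ℝ) * Real.logb 2 c := by
    refine ciSup_le fun k => ?_
    have h2 : (1 / 2 : ℝ) * Real.logb 2 (q2 k)
        ≤ ⨆ k : Fin K, (1 / 2 : ℝ) * Real.logb 2 (q2 k) :=
      le_ciSup (f := fun k => (1 / 2 : ℝ) * Real.logb 2 (q2 k)) (Set.Finite.bddAbove (Set.finite_range _)) k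
    linarith [key k]
  have hKn : (0:ℝ) ≤ (K : ℝ) := Nat.cast_nonneg K
  calc (K : ℝ) * ⨆ k : Fin K, (1 / 2 : ℝ) * Real.logb 2 (q1 k)
      ≤ (K : ℝ) * ((⨆ k : Fin K, (1 / 2 : ℝ) * Real.logb 2 (q2 k))
          + (1 / 2 : ℝ) * Real.logb 2 c) := mul_le_mul_of_nonneg_left hsup hKn
    _ = (K : ℝ) * (⨆ k : Fin K, (1 / 2 : ℝ) * Real.logb 2 (q2 k))
          + (K : ℝ) * ((1 / 2 : ℝ) * Real.logb 2 c) := by ring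

/-- If each diagonal variance satisfies `s i ≤ η² sΔ i` with `η ≥ 1`, then the optimal
IF rate for `S` is at most that for `S^Δ` plus `K log₂ η`. -/
theorem ifRateOpt_quantization_bound {K : ℕ} (hK : 0 < K)
    (P : Matrix (Fin K) (Fin K) ℝ)
    (s sΔ : Fin K → ℝ) (hs : ∀ i, 0 ≤ s i) (hsΔ : ∀ i, 0 ≤ sΔ i)
    (η : ℝ) (hη : 1 ≤ η)
    (hdom : ∀ i, s i ≤ η ^ 2 * sΔ i) :
    ifRateOpt s P ≤ ifRateOpt sΔ P + (K : ℝ) * Real.logb 2 η := by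
  have hη2 : (1:ℝ) ≤ η ^ 2 := by nlinarith
  have hmain : ∀ A : Matrix (Fin K) (Fin K) ℤ,
      ifRate s P A ≤ ifRate sΔ P A + (K : ℝ) * Real.logb 2 η := by
    intro A
    have := ifRate_le_of hK P s sΔ hs hsΔ (η ^ 2) hη2
      (fun i => by nlinarith [hsΔ i, hdom i]) A
    have hlog : Real.logb 2 (η ^ 2) = 2 * Real.logb 2 η := by
      rw [Real.logb_pow]; norm_num
    rw [hlog] at this
    linarith
  set c' : ℝ := 1 + ∑ i, sΔ i with hc'
  have hc'1 : (1:ℝ) ≤ c' := by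
    have : (0:ℝ) ≤ ∑ i, sΔ i := Finset.sum_nonneg fun i _ => hsΔ i
    linarith
  have hrev : ∀ A : Matrix (Fin K) (Fin K) ℤ,
      ifRate sΔ P A ≤ ifRate s P A + (K : ℝ) * ((1/2 : ℝ) * Real.logb 2 c') := by
    intro A
    refine ifRate_le_of hK P sΔ s hsΔ hs c' hc'1 (fun i => ?_) A
    have h1 : sΔ i ≤ ∑ j, sΔ j :=
      Finset.single_le_sum (fun j _ => hsΔ j) (Finset.mem_univ i)
    nlinarith [hs i]
  set Ts := {r : ℝ | ∃ A : Matrix (Fin K) (Fin K) ℤ, A.det ≠ 0 ∧ r = ifRate s P A} with hTs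
  set TΔ := {r : ℝ | ∃ A : Matrix (Fin K) (Fin K) ℤ, A.det ≠ 0 ∧ r = ifRate sΔ P A} with hTΔ
  have hne : TΔ.Nonempty := ⟨ifRate sΔ P 1, 1, by simp, rfl⟩
  have hlogη : 0 ≤ Real.logb 2 η := Real.logb_nonneg one_lt_two hη
  by_cases hbd : BddBelow Ts
  · unfold ifRateOpt
    have h1 : sInf Ts - (K : ℝ) * Real.logb 2 η ≤ sInf TΔ := by
      refine le_csInf hne fun x hx => ?_
      obtain ⟨A, hA, rfl⟩ := hx
      have h2 : sInf Ts ≤ ifRate s P A := csInf_le hbd ⟨A, hA, rfl⟩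
      linarith [hmain A]
    linarith
  · have hbdΔ : ¬ BddBelow TΔ := by
      intro ⟨m, hm⟩
      refine hbd ⟨m - (K : ℝ) * ((1/2 : ℝ) * Real.logb 2 c'), ?_⟩
      rintro x ⟨A, hA, rfl⟩
      have := hm (⟨A, hA, rfl⟩ : ifRate sΔ P A ∈ TΔ)
      linarith [hrev A]
    unfold ifRateOpt
    rw [show ({r : ℝ | ∃ A : Matrix (Fin K) (Fin K) ℤ, A.det ≠ 0 ∧ r = ifRate s P A}) = Ts from rfl,
      show ({r : ℝ | ∃ A : Matrix (Fin K) (Fin K) ℤ, A.det ≠ 0 ∧ r = ifRate sΔ P A}) = TΔ from rfl,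
      csInf_of_not_bddBelow hbd, csInf_of_not_bddBelow hbdΔ, Real.sInf_empty]
    have hKn : (0:ℝ) ≤ (K : ℝ) := Nat.cast_nonneg K
    nlinarith
end

section
/- For a positive definite matrix M = I + K_xx ∈ ℝ^{K×K} with Cholesky M = F Fᵀ, the integer-forcing rate (K/2)·log₂( min over invertible A ∈ ℤ^{K×K} of max_k a_kᵀ M a_k ) equals (K/2)·log₂( λ_K(Fᵀ)² ), where λ_K(Fᵀ) is the K-th successive minimum of the lattice spanned by Fᵀ. -/
open Matrix Real

noncomputable def enorm {K : ℕ} (x : Fin K → ℝ) : ℝ := Real.sqrt (∑ i, (x i) ^ 2)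

noncomputable def succMin {K : ℕ} (G : Matrix (Fin K) (Fin K) ℝ) (k : ℕ) : ℝ :=
  sInf {r : ℝ | 0 ≤ r ∧ k ≤ Module.finrank ℝ (Submodule.span ℝ
    {x : Fin K → ℝ | (∃ a : Fin K → ℤ, x = G.mulVec (fun i => (a i : ℝ))) ∧ _root_.enorm x ≤ r})}

section Aux

variable {K : ℕ}

lemma quad_eq (F : Matrix (Fin K) (Fin K) ℝ) (A : Matrix (Fin K) (Fin K) ℤ) (k : Fin K) :
    ((A.map (Int.cast : ℤ → ℝ)) * (F * Fᵀ) * (A.map (Int.cast : ℤ → ℝ))ᵀ) k k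
      = ∑ j, ((Fᵀ.mulVec (fun i => ((A k i : ℤ) : ℝ))) j) ^ 2 := by
  set B := A.map (Int.cast : ℤ → ℝ)
  have h1 : B * (F * Fᵀ) * Bᵀ = (B * F) * (B * F)ᵀ := by
    rw [transpose_mul, Matrix.mul_assoc, Matrix.mul_assoc, Matrix.mul_assoc]
  rw [h1, mul_apply]
  refine Finset.sum_congr rfl fun j _ => ?_
  rw [transpose_apply, ← sq]
  congr 1
  rw [mulVec, dotProduct, mul_apply]
  exact Finset.sum_congr rfl fun i _ => by simp [B, mul_comm]

lemma det_cast (A : Matrix (Fin K) (Fin K) ℤ) :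
    (A.map (Int.cast : ℤ → ℝ)).det = ((A.det : ℤ) : ℝ) := by
  rw [show (Int.cast : ℤ → ℝ) = ⇑(Int.castRingHom ℝ) from rfl, ← RingHom.mapMatrix_apply,
    ← RingHom.map_det]

lemma row_eq (F : Matrix (Fin K) (Fin K) ℝ) (A : Matrix (Fin K) (Fin K) ℤ) (k : Fin K) :
    Fᵀ.mulVec (fun i => ((A k i : ℤ) : ℝ)) = ((A.map (Int.cast : ℤ → ℝ)) * F) k := by
  funext j
  rw [mulVec, dotProduct, mul_apply]
  exact Finset.sum_congr rfl fun i _ => by simp [mul_comm]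

lemma indep_rows {F : Matrix (Fin K) (Fin K) ℝ} (hF : F.det ≠ 0)
    {A : Matrix (Fin K) (Fin K) ℤ} (hA : A.det ≠ 0) :
    LinearIndependent ℝ (fun k => Fᵀ.mulVec (fun i => ((A k i : ℤ) : ℝ))) := by
  have hB : ((A.map (Int.cast : ℤ → ℝ)) * F).det ≠ 0 := by
    rw [det_mul, det_cast]
    refine mul_ne_zero ?_ hF
    exact_mod_cast hA
  have := (Matrix.linearIndependent_rows_iff_isUnit
    (A := (A.map (Int.cast : ℤ → ℝ)) * F)).2
    ((Matrix.isUnit_iff_isUnit_det _).2 (isUnit_iff_ne_zero.2 hB))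
  have e : (fun k => Fᵀ.mulVec (fun i => ((A k i : ℤ) : ℝ))) = ((A.map (Int.cast : ℤ → ℝ)) * F).row :=
    funext fun k => row_eq F A k
  rw [e]
  exact this

end Aux

/-- The integer-forcing rate expressed via the `K`-th successive minimum: minimizing
over full-rank integer matrices `A` the maximum over rows of `a_kᵀ (I + Kxx) a_k`
equals `λ_K(Fᵀ)²`, where `I + Kxx = F Fᵀ`. -/
theorem if_rate_eq_succMin {K : ℕ} (hK : 0 < K)
    (Kxx F : Matrix (Fin K) (Fin K) ℝ) (hKxx : Kxx.PosSemidef)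
    (hChol : (1 : Matrix (Fin K) (Fin K) ℝ) + Kxx = F * Fᵀ) :
    ((K : ℝ) / 2) * Real.logb 2
      (sInf {r : ℝ | ∃ A : Matrix (Fin K) (Fin K) ℤ, A.det ≠ 0 ∧
        r = ⨆ k : Fin K,
          (((A.map (Int.cast : ℤ → ℝ)) * (1 + Kxx) * (A.map (Int.cast : ℤ → ℝ))ᵀ) k k)})
      = ((K : ℝ) / 2) * Real.logb 2 ((succMin Fᵀ K) ^ 2) := by
  haveI : Nonempty (Fin K) := ⟨⟨0, hK⟩⟩
  have hM : ((1 : Matrix (Fin K) (Fin K) ℝ) + Kxx).PosDef :=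
    Matrix.PosDef.add_posSemidef Matrix.PosDef.one hKxx
  have hF : F.det ≠ 0 := by
    have h := hM.det_pos
    rw [hChol, det_mul, det_transpose] at h
    intro h0; rw [h0, mul_zero] at h; exact lt_irrefl 0 h
  set L : ℝ → Set (Fin K → ℝ) := fun r =>
    {x : Fin K → ℝ | (∃ a : Fin K → ℤ, x = Fᵀ.mulVec (fun i => (a i : ℝ))) ∧ _root_.enorm x ≤ r}
    with hLdef
  set T : Set ℝ := {r : ℝ | 0 ≤ r ∧ K ≤ Module.finrank ℝ (Submodule.span ℝ (L r))} with hTdef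
  have hsM : succMin Fᵀ K = sInf T := rfl
  set S : Set ℝ := {r : ℝ | ∃ A : Matrix (Fin K) (Fin K) ℤ, A.det ≠ 0 ∧
        r = ⨆ k : Fin K,
          (((A.map (Int.cast : ℤ → ℝ)) * (1 + Kxx) * (A.map (Int.cast : ℤ → ℝ))ᵀ) k k)}
    with hSdef
  -- quadratic form value
  have hquad : ∀ (A : Matrix (Fin K) (Fin K) ℤ) (k : Fin K),
      ((A.map (Int.cast : ℤ → ℝ)) * (1 + Kxx) * (A.map (Int.cast : ℤ → ℝ))ᵀ) k k
        = ∑ j, ((Fᵀ.mulVec (fun i => ((A k i : ℤ) : ℝ))) j) ^ 2 := by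
    intro A k; rw [hChol]; exact quad_eq F A k
  have hqnn : ∀ (A : Matrix (Fin K) (Fin K) ℤ) (k : Fin K),
      0 ≤ ((A.map (Int.cast : ℤ → ℝ)) * (1 + Kxx) * (A.map (Int.cast : ℤ → ℝ))ᵀ) k k := by
    intro A k; rw [hquad]; positivity
  have hS_ne : S.Nonempty := ⟨_, ⟨1, by simp, rfl⟩⟩
  have hS_nonneg : ∀ s ∈ S, (0 : ℝ) ≤ s := by
    rintro s ⟨A, hA, rfl⟩
    exact le_trans (hqnn A ⟨0, hK⟩)
      (le_ciSup (f := fun k : Fin K =>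
        (((A.map (Int.cast : ℤ → ℝ)) * (1 + Kxx) * (A.map (Int.cast : ℤ → ℝ))ᵀ) k k))
        (Set.Finite.bddAbove (Set.finite_range _)) (⟨0, hK⟩ : Fin K))
  -- For each s ∈ S, √s ∈ T
  have hsqrtT : ∀ s ∈ S, Real.sqrt s ∈ T := by
    rintro s ⟨A, hA, hs⟩
    refine ⟨Real.sqrt_nonneg _, ?_⟩
    set v : Fin K → (Fin K → ℝ) := fun k => Fᵀ.mulVec (fun i => ((A k i : ℤ) : ℝ)) with hv
    have hrange : Set.range v ⊆ L (Real.sqrt s) := by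
      rintro x ⟨k, rfl⟩
      refine ⟨⟨fun i => A k i, rfl⟩, ?_⟩
      have h1 : _root_.enorm (v k) = Real.sqrt
          (((A.map (Int.cast : ℤ → ℝ)) * (1 + Kxx) * (A.map (Int.cast : ℤ → ℝ))ᵀ) k k) := by
        rw [_root_.enorm, hquad]
      rw [h1]
      refine Real.sqrt_le_sqrt ?_
      rw [hs]
      exact le_ciSup (f := fun k : Fin K =>
        (((A.map (Int.cast : ℤ → ℝ)) * (1 + Kxx) * (A.map (Int.cast : ℤ → ℝ))ᵀ) k k))
        (Set.Finite.bddAbove (Set.finite_range _)) k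
    have hind : LinearIndependent ℝ v := indep_rows hF hA
    calc K = Module.finrank ℝ (Submodule.span ℝ (Set.range v)) := by
            rw [finrank_span_eq_card hind, Fintype.card_fin]
      _ ≤ Module.finrank ℝ (Submodule.span ℝ (L (Real.sqrt s))) :=
            Submodule.finrank_mono (Submodule.span_mono hrange)
  have hT_ne : T.Nonempty := by
    obtain ⟨s, hs⟩ := hS_ne
    exact ⟨Real.sqrt s, hsqrtT s hs⟩
  have hT_bdd : BddBelow T := ⟨0, fun r hr => hr.1⟩
  have hT_nonneg : (0 : ℝ) ≤ sInf T := le_csInf hT_ne fun r hr => hr.1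
  -- lower bound : sInf T ^ 2 ≤ sInf S
  have hlow : (sInf T) ^ 2 ≤ sInf S := by
    refine le_csInf hS_ne fun s hs => ?_
    have h1 : sInf T ≤ Real.sqrt s := csInf_le hT_bdd (hsqrtT s hs)
    calc (sInf T) ^ 2 ≤ (Real.sqrt s) ^ 2 := pow_le_pow_left₀ hT_nonneg h1 2
      _ = s := Real.sq_sqrt (hS_nonneg s hs)
  -- upper direction : ∀ r ∈ T, sInf S ≤ r ^ 2
  have hup1 : ∀ r ∈ T, sInf S ≤ r ^ 2 := by
    rintro r ⟨hr0, hrk⟩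
    obtain ⟨b, hb_sub, hb_span, hb_ind⟩ := exists_linearIndependent ℝ (L r)
    have hbfin : b.Finite := hb_ind.setFinite
    haveI : Fintype b := hbfin.fintype
    have hcard : Module.finrank ℝ (Submodule.span ℝ b) = b.toFinset.card :=
      finrank_span_set_eq_card hb_ind
    have hKle : K ≤ b.toFinset.card := by
      rw [← hcard, hb_span]; exact hrk
    have hle : Module.finrank ℝ (Submodule.span ℝ b) ≤ K := by
      have := Submodule.finrank_le (Submodule.span ℝ b)
      rwa [Module.finrank_fin_fun] at this
    have hcardK : Fintype.card b = K := by
      rw [Set.toFinset_card] at hcard hKle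
      omega
    set e : Fin K ≃ b := (Fintype.equivFinOfCardEq hcardK).symm with he
    set x : Fin K → (Fin K → ℝ) := fun k => (e k : Fin K → ℝ) with hx
    have hxL : ∀ k, x k ∈ L r := fun k => hb_sub (e k).2
    have hxind : LinearIndependent ℝ x := hb_ind.comp e e.injective
    choose a ha using fun k => (hxL k).1
    set A : Matrix (Fin K) (Fin K) ℤ := fun k i => a k i with hA
    have hva : ∀ k, Fᵀ.mulVec (fun i => ((A k i : ℤ) : ℝ)) = x k := fun k => (ha k).symm
    have hdetB : ((A.map (Int.cast : ℤ → ℝ)) * F).det ≠ 0 := by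
      have hind2 : LinearIndependent ℝ (fun k => ((A.map (Int.cast : ℤ → ℝ)) * F) k) := by
        have : (fun k => ((A.map (Int.cast : ℤ → ℝ)) * F) k) = x := by
          funext k; rw [← row_eq, hva]
        rw [this]; exact hxind
      have := (Matrix.linearIndependent_rows_iff_isUnit).1 hind2
      exact ((Matrix.isUnit_iff_isUnit_det _).1 this).ne_zero
    have hdetA : A.det ≠ 0 := by
      intro h0
      apply hdetB
      rw [det_mul, det_cast, h0]
      simp
    have hmem : (⨆ k : Fin K,
        (((A.map (Int.cast : ℤ → ℝ)) * (1 + Kxx) * (A.map (Int.cast : ℤ → ℝ))ᵀ) k k)) ∈ S :=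
      ⟨A, hdetA, rfl⟩
    refine le_trans (csInf_le ⟨0, fun s hs => hS_nonneg s hs⟩ hmem) ?_
    refine ciSup_le fun k => ?_
    rw [hquad]
    have h1 : ∑ j, ((Fᵀ.mulVec (fun i => ((A k i : ℤ) : ℝ))) j) ^ 2 = _root_.enorm (x k) ^ 2 := by
      rw [_root_.enorm, Real.sq_sqrt (by positivity), hva]
    rw [h1]
    exact pow_le_pow_left₀ (Real.sqrt_nonneg _) (hxL k).2 2
  have hS_nn : (0 : ℝ) ≤ sInf S := le_csInf hS_ne hS_nonneg
  have hup : sInf S ≤ (sInf T) ^ 2 := by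
    have h1 : Real.sqrt (sInf S) ≤ sInf T := by
      refine le_csInf hT_ne fun r hr => ?_
      have := hup1 r hr
      calc Real.sqrt (sInf S) ≤ Real.sqrt (r ^ 2) := Real.sqrt_le_sqrt this
        _ = r := Real.sqrt_sq hr.1
    calc sInf S = Real.sqrt (sInf S) ^ 2 := (Real.sq_sqrt hS_nn).symm
      _ ≤ (sInf T) ^ 2 := pow_le_pow_left₀ (Real.sqrt_nonneg _) h1 2
  have hmain : sInf S = (succMin Fᵀ K) ^ 2 := by
    rw [hsM]; exact le_antisymm hup hlow
  rw [hmain]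
end
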